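/- (Proposition 1 of the paper.) Suppose the set I = {i : κ_i ≠ 0} is nonempty, p is a probability vector with min_{i∈I} p_i > 0, and θ(κ, p) ≤ min_{i∈I} p_i, where θ(κ, p) = nλγ·(∑_{i∈I} κ_i²) / (∑_{i∈I} κ_i²(v_i + nλγ)/p_i). For each i let Δ_i ∈ ℝ maximize Δ ↦ −φ_i*(−(α_i + Δ)) − (A_iᵀw)·Δ − (v_i/(2λn))·Δ². Then ∑_{i=1}^n p_i·(D(α + Δ_i e_i) − D(α)) ≥ θ(κ, p)·(P(w) − D(α)). -/

import Mathlib

open scoped BigOperators InnerProductSpace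

private lemma descent1d (f f' : ℝ → ℝ) (hf : ∀ t, HasDerivAt f (f' t) t) (c : ℝ)
    (hc : ∀ t ∈ Set.Icc (0:ℝ) 1, f' t - f' 0 ≤ c * t) :
    f 1 ≤ f 0 + f' 0 + c / 2 := by
  set r : ℝ → ℝ := fun t => f t - t * f' 0 - c * t ^ 2 / 2 with hrdef
  have hr' : ∀ t, HasDerivAt r (f' t - f' 0 - c * t) t := by
    intro t
    have h1 : HasDerivAt (fun t : ℝ => t * f' 0) (f' 0) t := by
      simpa using (hasDerivAt_id t).mul_const (f' 0)
    have h2 : HasDerivAt (fun t : ℝ => c * t ^ 2 / 2) (c * t) t := by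
      have := ((hasDerivAt_pow 2 t).const_mul c).div_const 2
      simpa [mul_comm, mul_assoc, mul_div_assoc] using this
    exact ((hf t).sub h1).sub h2
  have hanti : AntitoneOn r (Set.Icc (0:ℝ) 1) := by
    apply antitoneOn_of_deriv_nonpos (convex_Icc 0 1)
    · exact fun t _ => ((hr' t).differentiableAt.continuousAt.continuousWithinAt)
    · intro t ht
      exact (hr' t).differentiableAt.differentiableWithinAt
    · intro t ht
      rw [interior_Icc] at ht
      rw [(hr' t).deriv]
      have := hc t ⟨ht.1.le, ht.2.le⟩
      linarith
  have := hanti (Set.left_mem_Icc.2 zero_le_one) (Set.right_mem_Icc.2 zero_le_one) zero_le_one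
  simp only [hrdef] at this
  norm_num at this
  linarith

private lemma smooth_of_lipderiv (gam : ℝ) (hgam : 0 < gam) (f f' : ℝ → ℝ)
    (hd : ∀ x, HasDerivAt f (f' x) x)
    (hl : ∀ a b, |f' a - f' b| ≤ (1/gam) * |a - b|) (x y : ℝ) :
    f y ≤ f x + f' x * (y - x) + (y - x)^2 / (2*gam) := by
  have habs : |y-x| * |y-x| = (y-x)^2 := by rw [← abs_mul, abs_mul_self]; ring
  have key := descent1d (fun t => f (x + t*(y-x))) (fun t => f' (x + t*(y-x)) * (y-x))
    (fun t => by
      have hcurve : HasDerivAt (fun t : ℝ => x + t*(y-x)) (y-x) t := by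
        simpa using ((hasDerivAt_id t).mul_const (y-x)).const_add x
      exact (hd (x + t*(y-x))).comp t hcurve)
    ((y-x)^2/gam)
    (fun t ht => by
      have h1 : f' (x + t*(y-x)) * (y-x) - f' (x + 0*(y-x)) * (y-x)
          = (f' (x + t*(y-x)) - f' x) * (y-x) := by ring_nf
      rw [h1]
      have h2 : (f' (x + t*(y-x)) - f' x) * (y-x) ≤ |f' (x + t*(y-x)) - f' x| * |y-x| := by
        calc _ ≤ |(f' (x + t*(y-x)) - f' x) * (y-x)| := le_abs_self _
        _ = _ := abs_mul _ _
      have h3 := hl (x + t*(y-x)) x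
      have h4 : |x + t*(y-x) - x| = t * |y - x| := by
        rw [show x + t*(y-x) - x = t * (y-x) by ring, abs_mul, abs_of_nonneg ht.1]
      have h5 : |f' (x + t*(y-x)) - f' x| * |y-x| ≤ (1/gam) * (t * |y-x|) * |y-x| := by
        rw [h4] at h3
        exact mul_le_mul_of_nonneg_right h3 (abs_nonneg _)
      have h6 : (1/gam) * (t * |y-x|) * |y-x| = (y-x)^2/gam * t := by
        rw [mul_assoc (1/gam), mul_assoc t, habs]; ring
      linarith)
  norm_num at key
  have : (y-x)^2/gam/2 = (y-x)^2/(2*gam) := by ring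
  linarith

private lemma gs_descent {d : ℕ} (gs : EuclideanSpace ℝ (Fin d) → ℝ)
    (gs' : EuclideanSpace ℝ (Fin d) → EuclideanSpace ℝ (Fin d))
    (hgs' : ∀ z, HasGradientAt gs (gs' z) z) (hlip : LipschitzWith 1 gs')
    (z u : EuclideanSpace ℝ (Fin d)) :
    gs (z + u) ≤ gs z + ⟪gs' z, u⟫_ℝ + ‖u‖^2/2 := by
  have key := descent1d (fun t => gs (z + t • u)) (fun t => ⟪gs' (z + t • u), u⟫_ℝ)
    (fun t => by
      have hcurve : HasDerivAt (fun t : ℝ => z + t • u) u t := by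
        simpa using ((hasDerivAt_id t).smul_const u).const_add z
      have := ((hgs' (z + t • u)).hasFDerivAt).comp_hasDerivAt t hcurve
      simp [InnerProductSpace.toDual_apply_apply] at this
      exact this)
    (‖u‖^2)
    (fun t ht => by
      have h0 : (0:ℝ) • u = 0 := zero_smul ℝ u
      have h1 : ⟪gs' (z + t • u), u⟫_ℝ - ⟪gs' (z + (0:ℝ) • u), u⟫_ℝ
          = ⟪gs' (z + t • u) - gs' z, u⟫_ℝ := by
        rw [h0, add_zero, inner_sub_left]
      rw [h1]
      calc ⟪gs' (z + t • u) - gs' z, u⟫_ℝ ≤ ‖gs' (z + t • u) - gs' z‖ * ‖u‖ :=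
            real_inner_le_norm _ _
      _ ≤ ‖(z + t • u) - z‖ * ‖u‖ := by
            have := hlip.dist_le_mul (z + t • u) z
            rw [NNReal.coe_one, one_mul, dist_eq_norm, dist_eq_norm] at this
            exact mul_le_mul_of_nonneg_right this (norm_nonneg _)
      _ = t * ‖u‖^2 := by
            rw [show (z + t • u) - z = t • u by abel, norm_smul,
              Real.norm_eq_abs, abs_of_nonneg ht.1]; ring
      _ = ‖u‖^2 * t := by ring)
  norm_num at key
  convert key using 2

set_option maxHeartbeats 2000000 in
/-- Proposition 1 of the paper: Suppose `I = {i : κᵢ ≠ 0}` is nonempty,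
`p` is a probability vector with `min_{i∈I} pᵢ > 0`, and `θ(κ,p) ≤ min_{i∈I} pᵢ`, where
`θ(κ,p) = nλγ(∑_{i∈I} κᵢ²)/(∑_{i∈I} κᵢ²(vᵢ+nλγ)/pᵢ)`. For each `i` let `Δᵢ` maximize
`Δ ↦ −φᵢ*(−(αᵢ+Δ)) − (Aᵢᵀw)Δ − (vᵢ/(2λn))Δ²`. Then
`∑ᵢ pᵢ(D(α+Δᵢeᵢ) − D(α)) ≥ θ(κ,p)(P(w) − D(α))`. -/
theorem stmt9 (n d : ℕ) (hn : 1 ≤ n) (hd : 1 ≤ d)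
    (A : Fin n → EuclideanSpace ℝ (Fin d))
    (v : Fin n → ℝ) (hv : ∀ i, v i = ‖A i‖ ^ 2)
    (lam gam : ℝ) (hlam : 0 < lam) (hgam : 0 < gam)
    (g : EuclideanSpace ℝ (Fin d) → ℝ)
    (hg : ∀ w₁ w₂ : EuclideanSpace ℝ (Fin d), ∀ a : ℝ, 0 ≤ a → a ≤ 1 →
      g (a • w₁ + (1 - a) • w₂) ≤ a * g w₁ + (1 - a) * g w₂ - a * (1 - a) / 2 * ‖w₁ - w₂‖ ^ 2)
    (φ φ' : Fin n → ℝ → ℝ)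
    (hφconv : ∀ i, ConvexOn ℝ Set.univ (φ i))
    (hφdiff : ∀ i x, HasDerivAt (φ i) (φ' i x) x)
    (hφlip : ∀ i, ∀ a b : ℝ, |φ' i a - φ' i b| ≤ (1 / gam) * |a - b|)
    (φs : Fin n → ℝ → ℝ)
    (hφs : ∀ i u, IsLUB (Set.range fun x : ℝ => x * u - φ i x) (φs i u))
    (gs : EuclideanSpace ℝ (Fin d) → ℝ)
    (hgs : ∀ z, IsLUB (Set.range fun s : EuclideanSpace ℝ (Fin d) => ⟪s, z⟫_ℝ - g s) (gs z))
    (gs' : EuclideanSpace ℝ (Fin d) → EuclideanSpace ℝ (Fin d))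
    (hgs' : ∀ z, HasGradientAt gs (gs' z) z)
    (hgs'lip : LipschitzWith 1 gs')
    (P : EuclideanSpace ℝ (Fin d) → ℝ)
    (hP : ∀ u, P u = (1 / (n : ℝ)) * ∑ i, φ i ⟪A i, u⟫_ℝ + lam * g u)
    (D : (Fin n → ℝ) → ℝ)
    (hD : ∀ β : Fin n → ℝ,
      D β = -lam * gs ((1 / (lam * n)) • (∑ i, β i • A i)) - (1 / (n : ℝ)) * ∑ i, φs i (-β i))
    (α : Fin n → ℝ)
    (abar : EuclideanSpace ℝ (Fin d))
    (habar : abar = (1 / (lam * n)) • (∑ i, α i • A i))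
    (w : EuclideanSpace ℝ (Fin d)) (hw : w = gs' abar)
    (hattain : g w + gs abar = ⟪w, abar⟫_ℝ)
    (κ : Fin n → ℝ) (hκ : ∀ i, κ i = α i + φ' i ⟪A i, w⟫_ℝ)
    (Δ : Fin n → ℝ)
    (hΔ : ∀ i, ∀ Δ' : ℝ,
      -φs i (-(α i + Δ')) - ⟪A i, w⟫_ℝ * Δ' - v i / (2 * lam * n) * Δ' ^ 2 ≤
      -φs i (-(α i + Δ i)) - ⟪A i, w⟫_ℝ * (Δ i) - v i / (2 * lam * n) * (Δ i) ^ 2)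
    (p : Fin n → ℝ) (hp0 : ∀ i, 0 ≤ p i) (hp1 : ∑ i, p i = 1)
    (hcoh : ∀ i, κ i ≠ 0 → 0 < p i)
    (hI : ∃ i, κ i ≠ 0)
    (θval : ℝ)
    (hθval : θval = (n : ℝ) * lam * gam *
        (∑ i ∈ Finset.univ.filter (fun i => κ i ≠ 0), κ i ^ 2) /
        (∑ i ∈ Finset.univ.filter (fun i => κ i ≠ 0),
          κ i ^ 2 * (v i + n * lam * gam) / p i))
    (hθmin : ∀ i, κ i ≠ 0 → θval ≤ p i) :
    ∑ i, p i * (D (Function.update α i (α i + Δ i)) - D α) ≥ θval * (P w - D α) := by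
  have hn0 : (0:ℝ) < n := by
    have : (1:ℝ) ≤ n := by exact_mod_cast hn
    linarith
  have hln : (0:ℝ) < lam * n := mul_pos hlam hn0
  -- Fenchel-Young
  have hfy : ∀ (i) (x u : ℝ), x * u - φ i x ≤ φs i u := fun i x u => (hφs i u).1 ⟨x, rfl⟩
  -- subgradient inequality
  have hsub : ∀ (i) (x y : ℝ), φ i x + φ' i x * (y - x) ≤ φ i y := by
    intro i x y
    rcases lt_trichotomy x y with h | h | h
    · have hs := (hφconv i).le_slope_of_hasDerivAt (Set.mem_univ x) (Set.mem_univ y) h (hφdiff i x)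
      rw [slope_def_field] at hs
      have hxy : 0 < y - x := by linarith
      rw [le_div_iff₀ hxy] at hs
      linarith
    · subst h; simp
    · have hs := (hφconv i).slope_le_of_hasDerivAt (Set.mem_univ y) (Set.mem_univ x) h (hφdiff i x)
      rw [slope_def_field] at hs
      have hxy : 0 < x - y := by linarith
      rw [div_le_iff₀ hxy] at hs
      linarith
  -- Fenchel equality
  have hfe : ∀ (i) (x : ℝ), φs i (φ' i x) = x * φ' i x - φ i x := by
    intro i x
    refine le_antisymm ((hφs i _).2 ?_) (hfy i x _)
    rintro _ ⟨y, rfl⟩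
    show y * φ' i x - φ i y ≤ x * φ' i x - φ i x
    have := hsub i x y
    linarith
  -- smoothness
  have hsmooth : ∀ (i) (x y : ℝ), φ i y ≤ φ i x + φ' i x * (y-x) + (y-x)^2/(2*gam) :=
    fun i => smooth_of_lipderiv gam hgam _ _ (hφdiff i) (hφlip i)
  -- strong convexity of conjugate
  have hsc : ∀ (i) (s a b : ℝ), 0 ≤ s → s ≤ 1 →
      φs i ((1-s)*a + s*b) ≤ (1-s)*φs i a + s*φs i b - gam/2*s*(1-s)*(a-b)^2 := by
    intro i s a b hs0 hs1
    refine (hφs i _).2 ?_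
    rintro _ ⟨x, rfl⟩
    show x * ((1-s)*a + s*b) - φ i x ≤ _
    set t := gam*(a-b) with ht
    have F1 := hfy i (x + s*t) a
    have F2 := hfy i (x - (1-s)*t) b
    have S1 := hsmooth i x (x + s*t)
    have S2 := hsmooth i x (x - (1-s)*t)
    have H1 : (1-s) * ((x+s*t)*a - φ i x - φ' i x*(s*t) - (s*t)^2/(2*gam)) ≤ (1-s) * φs i a := by
      apply mul_le_mul_of_nonneg_left _ (by linarith)
      have : (x + s*t) - x = s*t := by ring
      rw [this] at S1
      linarith
    have H2 : s * ((x-(1-s)*t)*b - φ i x + φ' i x*((1-s)*t) - ((1-s)*t)^2/(2*gam)) ≤ s * φs i b := by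
      apply mul_le_mul_of_nonneg_left _ hs0
      have : (x - (1-s)*t) - x = -((1-s)*t) := by ring
      rw [this] at S2
      have e : (-((1-s)*t))^2 = ((1-s)*t)^2 := by ring
      rw [e] at S2
      linarith
    have key : x*((1-s)*a+s*b) - φ i x + gam/2*s*(1-s)*(a-b)^2 =
        (1-s) * ((x+s*t)*a - φ i x - φ' i x*(s*t) - (s*t)^2/(2*gam)) +
        s * ((x-(1-s)*t)*b - φ i x + φ' i x*((1-s)*t) - ((1-s)*t)^2/(2*gam)) := by
      rw [ht]; field_simp; ring
    linarith
  -- sum-update identities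
  have hupdsum : ∀ (i : Fin n) (c : ℝ),
      (∑ j, (Function.update α i c) j • A j) = (∑ j, α j • A j) + (c - α i) • A i := by
    intro i c
    have h1 : ∀ j, (Function.update α i c) j • A j
        = Function.update (fun j => α j • A j) i (c • A i) j := by
      intro j
      rcases eq_or_ne j i with rfl | hji
      · simp
      · simp [Function.update_of_ne hji]
    rw [Finset.sum_congr rfl (fun j _ => h1 j), Finset.sum_update_of_mem (Finset.mem_univ i),
      Finset.sum_eq_sum_sdiff_singleton_add (Finset.mem_univ i) (fun j => α j • A j), sub_smul]
    abel
  have hupdφs : ∀ (i : Fin n) (c : ℝ),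
      (∑ j, φs j (-(Function.update α i c j)))
        = (∑ j, φs j (-α j)) + (φs i (-c) - φs i (-α i)) := by
    intro i c
    have h1 : ∀ j, φs j (-(Function.update α i c j))
        = Function.update (fun j => φs j (-α j)) i (φs i (-c)) j := by
      intro j
      rcases eq_or_ne j i with rfl | hji
      · simp
      · simp [Function.update_of_ne hji]
    rw [Finset.sum_congr rfl (fun j _ => h1 j), Finset.sum_update_of_mem (Finset.mem_univ i),
      Finset.sum_eq_sum_sdiff_singleton_add (Finset.mem_univ i) (fun j => φs j (-α j))]
    ring
  -- per-coordinate dual change bound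
  have hDch : ∀ (i : Fin n) (Δ' : ℝ),
      (1/(n:ℝ)) * (-φs i (-(α i + Δ')) - ⟪A i, w⟫_ℝ * Δ' - v i / (2 * lam * n) * Δ' ^ 2
        + φs i (-α i))
      ≤ D (Function.update α i (α i + Δ')) - D α := by
    intro i Δ'
    have hscale : (1 / (lam * (n:ℝ))) • (∑ j, (Function.update α i (α i + Δ')) j • A j)
        = abar + (Δ' / (lam * n)) • A i := by
      rw [hupdsum i (α i + Δ'), smul_add, ← habar, add_sub_cancel_left, smul_smul]
      congr 1
      ring
    have hgd := gs_descent gs gs' hgs' hgs'lip abar ((Δ' / (lam * n)) • A i)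
    rw [← hw, real_inner_smul_right, norm_smul] at hgd
    have hgd2 : gs (abar + (Δ' / (lam * n)) • A i) - gs abar
        ≤ (Δ' / (lam * n)) * ⟪A i, w⟫_ℝ + (Δ' / (lam * n))^2 * v i / 2 := by
      have e : (‖(Δ'/(lam*(n:ℝ)) : ℝ)‖ * ‖A i‖)^2 = (Δ'/(lam*(n:ℝ)))^2 * v i := by
        rw [mul_pow, Real.norm_eq_abs, sq_abs, hv i]
      rw [e, real_inner_comm] at hgd
      linarith
    have hgd3 : lam * (gs (abar + (Δ' / (lam * n)) • A i) - gs abar)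
        ≤ (1/(n:ℝ)) * (⟪A i, w⟫_ℝ * Δ' + v i/(2*lam*n)*Δ'^2) := by
      have h := mul_le_mul_of_nonneg_left hgd2 hlam.le
      have e2 : lam * ((Δ'/(lam*(n:ℝ))) * ⟪A i, w⟫_ℝ + (Δ'/(lam*(n:ℝ)))^2 * v i / 2)
          = (1/(n:ℝ)) * (⟪A i, w⟫_ℝ * Δ' + v i/(2*lam*n)*Δ'^2) := by
        field_simp
      linarith [e2 ▸ h]
    rw [hD (Function.update α i (α i + Δ')), hD α, hscale, ← habar, hupdφs]
    have expand : -lam * gs (abar + (Δ' / (lam * ↑n)) • A i) -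
          1 / ↑n * ((∑ j, φs j (-α j)) + (φs i (-(α i + Δ')) - φs i (-α i))) -
          (-lam * gs abar - 1 / ↑n * ∑ j, φs j (-α j))
        = -lam * (gs (abar + (Δ' / (lam * ↑n)) • A i) - gs abar)
          - (1/(n:ℝ)) * (φs i (-(α i + Δ')) - φs i (-α i)) := by ring
    rw [expand]
    have hfin : (1/(n:ℝ)) * (-φs i (-(α i + Δ')) - ⟪A i, w⟫_ℝ * Δ' - v i / (2 * lam * n) * Δ' ^ 2
        + φs i (-α i)) = -(1/(n:ℝ)) * (⟪A i, w⟫_ℝ * Δ' + v i/(2*lam*n)*Δ'^2)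
        - (1/(n:ℝ)) * (φs i (-(α i + Δ')) - φs i (-α i)) := by ring
    rw [hfin]
    have := neg_le_neg hgd3
    linarith
  -- gap identity
  have hinner : ⟪w, abar⟫_ℝ = (1/(lam*(n:ℝ))) * ∑ i, α i * ⟪A i, w⟫_ℝ := by
    rw [habar, real_inner_smul_right, inner_sum]
    congr 1
    refine Finset.sum_congr rfl fun i _ => ?_
    rw [real_inner_smul_right, real_inner_comm]
  have hgap : P w - D α = (1/(n:ℝ)) * ∑ i,
      (φ i ⟪A i, w⟫_ℝ + φs i (-α i) + α i * ⟪A i, w⟫_ℝ) := by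
    rw [hP, hD α, ← habar]
    have h1 : g w = ⟪w, abar⟫_ℝ - gs abar := by linarith [hattain]
    rw [h1, hinner]
    simp only [Finset.sum_add_distrib]
    field_simp
    ring
  -- G and index set
  set G : Fin n → ℝ := fun i => φ i ⟪A i, w⟫_ℝ + φs i (-α i) + α i * ⟪A i, w⟫_ℝ with hG
  have hG0 : ∀ i, κ i = 0 → G i = 0 := by
    intro i h0
    have hκi := hκ i
    have hai : -α i = φ' i ⟪A i, w⟫_ℝ := by rw [h0] at hκi; linarith
    simp only [hG]
    rw [hai, hfe i]
    have : α i = -φ' i ⟪A i, w⟫_ℝ := by linarith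
    rw [this]
    ring
  set I := Finset.univ.filter (fun i => κ i ≠ 0) with hIdef
  obtain ⟨i₀, hi₀⟩ := hI
  have hi₀I : i₀ ∈ I := by simp [hIdef, hi₀]
  set Num := ∑ i ∈ I, κ i ^ 2 with hNum
  set Den := ∑ i ∈ I, κ i ^ 2 * (v i + n*lam*gam) / p i with hDend
  have hvnn : ∀ i, 0 ≤ v i := fun i => (hv i) ▸ sq_nonneg _
  have hnlg : (0:ℝ) < n * lam * gam := by positivity
  have hDpos : 0 < Den := by
    refine Finset.sum_pos (fun i hi => ?_) ⟨i₀, hi₀I⟩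
    have hki : κ i ≠ 0 := (Finset.mem_filter.1 hi).2
    have h1 : 0 < κ i ^ 2 := lt_of_le_of_ne (sq_nonneg _) (Ne.symm (pow_ne_zero 2 hki))
    have h2 : 0 < v i + n*lam*gam := by linarith [hvnn i]
    exact div_pos (mul_pos h1 h2) (hcoh i hki)
  have hNpos : 0 < Num :=
    Finset.sum_pos (fun i hi =>
      lt_of_le_of_ne (sq_nonneg _) (Ne.symm (pow_ne_zero 2 (Finset.mem_filter.1 hi).2)))
      ⟨i₀, hi₀I⟩
  have hθpos : 0 < θval := by
    rw [hθval]
    exact div_pos (by positivity) hDpos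
  have hθDen : θval * Den = (n:ℝ) * lam * gam * Num := by
    rw [hθval]
    field_simp
  -- main per-coordinate estimate on I
  set T : Fin n → ℝ := fun i =>
    (θval*gam/2)*κ i^2 - (θval^2/(2*lam*n)) * (κ i^2*(v i + n*lam*gam)/p i) with hT
  have hmain : ∀ i ∈ I, (1/(n:ℝ)) * (θval * G i + T i)
      ≤ p i * (D (Function.update α i (α i + Δ i)) - D α) := by
    intro i hi
    have hki : κ i ≠ 0 := (Finset.mem_filter.1 hi).2
    have hpi := hcoh i hki
    set s := θval / p i with hs
    have hs0 : 0 ≤ s := le_of_lt (div_pos hθpos hpi)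
    have hs1 : s ≤ 1 := (div_le_one hpi).2 (hθmin i hki)
    have st1 := hDch i (Δ i)
    have st2 := hΔ i (-(s * κ i))
    have hκi := hκ i
    have e2 : -(α i - κ i) = φ' i ⟪A i, w⟫_ℝ := by linarith
    have e3 : -(α i + -(s*κ i)) = (1-s)*(-α i) + s*(φ' i ⟪A i, w⟫_ℝ) := by
      rw [← e2]; ring
    have st3 := hsc i s (-α i) (φ' i ⟪A i, w⟫_ℝ) hs0 hs1
    rw [← e3, hfe i] at st3
    have e4 : (-α i - φ' i ⟪A i, w⟫_ℝ)^2 = κ i^2 := by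
      have : -α i - φ' i ⟪A i, w⟫_ℝ = -κ i := by linarith
      rw [this]; ring
    rw [e4] at st3
    -- combination step
    have comb : s * G i + gam/2*s*(1-s)*κ i^2 - v i * (s^2 * κ i^2)/(2*lam*n)
        ≤ -φs i (-(α i + -(s*κ i))) - ⟪A i, w⟫_ℝ * (-(s*κ i))
          - v i/(2*lam*n)*(-(s*κ i))^2 + φs i (-α i) := by
      have idt : (-φs i (-(α i + -(s*κ i))) - ⟪A i, w⟫_ℝ * (-(s*κ i))
            - v i/(2*lam*n)*(-(s*κ i))^2 + φs i (-α i))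
          - (s * G i + gam/2*s*(1-s)*κ i^2 - v i * (s^2*κ i^2)/(2*lam*n))
          = ((1-s)*φs i (-α i)
              + s*(⟪A i, w⟫_ℝ * φ' i ⟪A i, w⟫_ℝ - φ i ⟪A i, w⟫_ℝ)
              - gam/2*s*(1-s)*κ i^2)
            - φs i (-(α i + -(s*κ i))) := by
        simp only [hG]
        linear_combination (s * ⟪A i, w⟫_ℝ) * hκi
      linarith [idt, st3]
    have chain : (1/(n:ℝ)) * (s * G i + gam/2*s*(1-s)*κ i^2 - v i * (s^2 * κ i^2)/(2*lam*n))
        ≤ D (Function.update α i (α i + Δ i)) - D α := by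
      refine le_trans ?_ st1
      apply mul_le_mul_of_nonneg_left _ (by positivity)
      linarith [st2, comb]
    have hident : p i * ((1/(n:ℝ)) * (s * G i + gam/2*s*(1-s)*κ i^2
          - v i*(s^2*κ i^2)/(2*lam*n)))
        = (1/(n:ℝ)) * (θval * G i + T i) := by
      simp only [hT, hs]
      field_simp
      ring
    rw [← hident]
    exact mul_le_mul_of_nonneg_left chain hpi.le
  -- off I, everything is nonnegative
  have hoff : ∀ i, 0 ≤ D (Function.update α i (α i + Δ i)) - D α := by
    intro i
    have st1 := hDch i (Δ i)
    have st2 := hΔ i 0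
    simp only [add_zero, mul_zero, sub_zero, zero_pow, OfNat.ofNat_ne_zero, ne_eq,
      not_false_eq_true] at st2
    have h0 : (0:ℝ) ≤ (1/(n:ℝ)) * (-φs i (-(α i + Δ i)) - ⟪A i, w⟫_ℝ * Δ i
        - v i / (2 * lam * n) * Δ i ^ 2 + φs i (-α i)) := by
      apply mul_nonneg (by positivity)
      linarith
    linarith
  -- sum of T over I vanishes
  have hTsum : ∑ i ∈ I, T i = 0 := by
    have hsplit : ∑ i ∈ I, T i
        = (θval*gam/2) * Num - (θval^2/(2*lam*n)) * Den := by
      simp only [hT, hNum, hDend]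
      rw [Finset.sum_sub_distrib, Finset.mul_sum, Finset.mul_sum]
    rw [hsplit]
    have h2 : θval^2 * Den = θval * ((n:ℝ)*lam*gam*Num) := by
      rw [← hθDen]; ring
    have key : (θval*gam/2) * Num - (θval^2/(2*lam*n)) * Den
        = (1/(2*lam*(n:ℝ))) * (lam*(n:ℝ)*gam*θval*Num - θval^2*Den) := by
      field_simp
    have h3 : lam*(n:ℝ)*gam*θval*Num - θval^2*Den = 0 := by
      linear_combination (-θval) * hθDen
    rw [key, h3, mul_zero]
  -- sum of G over I equals total
  have hGsum : ∑ i ∈ I, G i = ∑ i, G i := by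
    have := Finset.sum_filter_add_sum_filter_not Finset.univ (fun i => κ i ≠ 0) G
    have hz : ∑ i ∈ Finset.univ.filter (fun i => ¬ κ i ≠ 0), G i = 0 :=
      Finset.sum_eq_zero fun i hi => hG0 i (not_not.1 (Finset.mem_filter.1 hi).2)
    rw [← this, hz, add_zero]
  -- assembly
  rw [ge_iff_le, hgap]
  have hsplit := (Finset.sum_filter_add_sum_filter_not Finset.univ (fun i => κ i ≠ 0)
    (fun i => p i * (D (Function.update α i (α i + Δ i)) - D α))).symm
  have hb1 : ∑ i ∈ I, (1/(n:ℝ)) * (θval * G i + T i)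
      ≤ ∑ i ∈ I, p i * (D (Function.update α i (α i + Δ i)) - D α) :=
    Finset.sum_le_sum hmain
  have hb2 : 0 ≤ ∑ i ∈ Finset.univ.filter (fun i => ¬ κ i ≠ 0),
      p i * (D (Function.update α i (α i + Δ i)) - D α) :=
    Finset.sum_nonneg fun i _ => mul_nonneg (hp0 i) (hoff i)
  have hlhs : ∑ i ∈ I, (1/(n:ℝ)) * (θval * G i + T i)
      = θval * ((1/(n:ℝ)) * ∑ i, G i) := by
    calc ∑ i ∈ I, (1/(n:ℝ)) * (θval * G i + T i)
        = ∑ i ∈ I, (θval * ((1/(n:ℝ)) * G i) + (1/(n:ℝ)) * T i) :=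
          Finset.sum_congr rfl fun i _ => by ring
      _ = θval * ∑ i ∈ I, ((1/(n:ℝ)) * G i) + (1/(n:ℝ)) * ∑ i ∈ I, T i := by
          rw [Finset.sum_add_distrib, Finset.mul_sum, Finset.mul_sum]
      _ = θval * ((1/(n:ℝ)) * ∑ i ∈ I, G i) := by
          rw [hTsum, mul_zero, add_zero, ← Finset.mul_sum]
      _ = θval * ((1/(n:ℝ)) * ∑ i, G i) := by rw [hGsum]
  calc θval * ((1/(n:ℝ)) * ∑ i, G i)
      = ∑ i ∈ I, (1/(n:ℝ)) * (θval * G i + T i) := hlhs.symm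
    _ ≤ ∑ i ∈ I, p i * (D (Function.update α i (α i + Δ i)) - D α) := hb1
    _ ≤ ∑ i, p i * (D (Function.update α i (α i + Δ i)) - D α) := by
        rw [hsplit]; simp only [hIdef]; linarith
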